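/- For every real number p ≥ 1, π_p = 2·Γ(1/p)² / (p·Γ(2/p)), where π_p := 2 ∫_0^1 (1 - t^p)^(-(p-1)/p) dt and Γ is the Gamma function. -/

import Mathlib

open Real intervalIntegral

open MeasureTheory Set in
private lemma beta_intable {s : ℝ} (hs0 : 0 < s) (hs1 : s < 1) :
    IntervalIntegrable (fun x : ℝ => x ^ (s - 1) * (1 - x) ^ (s - 1)) volume 0 1 := by
  have hre : (0:ℝ) < ((s : ℂ)).re := by simpa using hs0
  have h := (Complex.betaIntegral_convergent hre hre).norm
  rw [intervalIntegrable_iff, uIoc_of_le zero_le_one] at h ⊢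
  refine h.congr ?_
  filter_upwards [ae_restrict_mem measurableSet_Ioc] with x hx
  have hx0 : (0:ℝ) ≤ x := hx.1.le
  have h1x : (0:ℝ) ≤ 1 - x := by linarith [hx.2]
  have hre' : ((s:ℂ) - 1).re ≠ 0 := by
    simp only [Complex.sub_re, Complex.ofReal_re, Complex.one_re]
    linarith
  have e1 : (1 - (x:ℂ)) = ((1 - x : ℝ) : ℂ) := by push_cast; ring
  rw [norm_mul, e1,
    Complex.norm_cpow_eq_rpow_re_of_nonneg hx0 hre',
    Complex.norm_cpow_eq_rpow_re_of_nonneg h1x hre']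
  simp

open MeasureTheory Set in
private lemma beta_gamma {s : ℝ} (hs0 : 0 < s) :
    Real.Gamma s * Real.Gamma s
      = Real.Gamma (s + s) * ∫ x in (0:ℝ)..1, x ^ (s - 1) * (1 - x) ^ (s - 1) := by
  have hre : (0:ℝ) < ((s : ℂ)).re := by simpa using hs0
  have h := Complex.Gamma_mul_Gamma_eq_betaIntegral hre hre
  have hbeta : Complex.betaIntegral (s:ℂ) (s:ℂ)
      = ((∫ x in (0:ℝ)..1, x ^ (s - 1) * (1 - x) ^ (s - 1) : ℝ) : ℂ) := by
    rw [Complex.betaIntegral, ← intervalIntegral.integral_ofReal]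
    refine intervalIntegral.integral_congr_ae (MeasureTheory.ae_of_all _ fun x hx => ?_)
    rw [uIoc_of_le zero_le_one] at hx
    have hx0 : (0:ℝ) ≤ x := hx.1.le
    have h1x : (0:ℝ) ≤ 1 - x := by linarith [hx.2]
    have e0 : ((s:ℂ) - 1) = ((s - 1 : ℝ) : ℂ) := by push_cast; ring
    have e1 : (1 - (x:ℂ)) = ((1 - x : ℝ) : ℂ) := by push_cast; ring
    rw [e0, e1, ← Complex.ofReal_cpow hx0, ← Complex.ofReal_cpow h1x,
      ← Complex.ofReal_mul]
  rw [hbeta, show ((s:ℂ) + (s:ℂ)) = ((s + s : ℝ) : ℂ) by push_cast; ring,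
    Complex.Gamma_ofReal, Complex.Gamma_ofReal] at h
  exact_mod_cast h

open MeasureTheory Set in
private lemma main_intable {p : ℝ} (hp : 1 < p) :
    IntervalIntegrable (fun x : ℝ => (1 - x ^ p) ^ (1 / p - 1)) volume 0 1 := by
  have hp0 : (0:ℝ) < p := by linarith
  have hs1 : 1 / p < 1 := by rw [div_lt_one hp0]; linarith
  have he1 : (-1:ℝ) < 1 / p - 1 := by
    have : 0 < 1 / p := by positivity
    linarith
  have hone : IntervalIntegrable (fun x : ℝ => (1 - x) ^ (1 / p - 1)) volume 0 1 := by
    have := (intervalIntegrable_rpow' (a := (0:ℝ)) (b := 1) he1).comp_sub_left 1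
    simpa using this.symm
  rw [intervalIntegrable_iff, uIoc_of_le zero_le_one]
  rw [integrableOn_Ioc_iff_integrableOn_Ioo]
  have hone' : IntegrableOn (fun x : ℝ => (1 - x) ^ (1 / p - 1)) (Ioo (0:ℝ) 1) volume := by
    rw [intervalIntegrable_iff, uIoc_of_le zero_le_one] at hone
    exact hone.mono_set Ioo_subset_Ioc_self
  refine MeasureTheory.Integrable.mono hone' ?_ ?_
  · have hcont : ContinuousOn (fun x : ℝ => (1 - x ^ p) ^ (1 / p - 1)) (Ioo 0 1) := by
      intro x hx
      have hxp1 : x ^ p < 1 := Real.rpow_lt_one hx.1.le hx.2 hp0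
      have hinner : Continuous fun y : ℝ => 1 - y ^ p := by
        refine continuous_const.sub ?_
        rw [continuous_iff_continuousAt]
        exact fun y => Real.continuousAt_rpow_const y p (Or.inr hp0.le)
      exact (hinner.continuousAt.rpow_const (Or.inl (by show (1:ℝ) - x ^ p ≠ 0; intro h; nlinarith))).continuousWithinAt
    exact hcont.aestronglyMeasurable measurableSet_Ioo
  · filter_upwards [ae_restrict_mem measurableSet_Ioo] with x hx
    have hx0 : (0:ℝ) < x := hx.1
    have hx1 : x < 1 := hx.2
    have hxple : x ^ p ≤ x := by
      have := Real.rpow_le_rpow_of_exponent_ge hx0 hx1.le hp.le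
      simpa using this
    have h1 : 0 < 1 - x := by linarith
    have h2 : 1 - x ≤ 1 - x ^ p := by linarith
    rw [Real.norm_eq_abs, Real.norm_eq_abs, abs_of_nonneg (Real.rpow_nonneg (by linarith) _),
      abs_of_nonneg (Real.rpow_nonneg h1.le _)]
    exact Real.rpow_le_rpow_of_nonpos h1 h2 (by linarith)

open MeasureTheory Set in
private lemma subst_lemma {p : ℝ} (hp : 1 < p) :
    p * ∫ t in (0:ℝ)..1, (1 - t ^ p) ^ (1 / p - 1)
      = ∫ x in (0:ℝ)..1, x ^ (1 / p - 1) * (1 - x) ^ (1 / p - 1) := by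
  have hp0 : (0:ℝ) < p := by linarith
  have hs0 : (0:ℝ) < 1 / p := by positivity
  have hs1 : (1:ℝ) / p < 1 := by rw [div_lt_one hp0]; linarith
  set g : ℝ → ℝ := fun x => x ^ (1 / p - 1) * (1 - x) ^ (1 / p - 1) with hgdef
  set f : ℝ → ℝ := fun x => x ^ p with hfdef
  set F : ℝ → ℝ := fun x => p * x ^ (p - 1) with hFdef
  have hf : ContinuousOn f (uIcc (0:ℝ) 1) := fun x _ =>
    (Real.continuousAt_rpow_const x p (Or.inr hp0.le)).continuousWithinAt
  have hff' : ∀ x ∈ Ioo (min (0:ℝ) 1) (max 0 1), HasDerivWithinAt f (F x) (Ioi x) x := by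
    intro x hx
    simp only [min_eq_left zero_le_one, max_eq_right zero_le_one] at hx
    exact (Real.hasDerivAt_rpow_const (Or.inl hx.1.ne')).hasDerivWithinAt
  have himage : f '' Ioo (min (0:ℝ) 1) (max 0 1) ⊆ Ioo 0 1 := by
    rintro _ ⟨x, hx, rfl⟩
    simp only [min_eq_left zero_le_one, max_eq_right zero_le_one] at hx
    exact ⟨Real.rpow_pos_of_pos hx.1 p, Real.rpow_lt_one hx.1.le hx.2 hp0⟩
  have hg_cont : ContinuousOn g (f '' Ioo (min (0:ℝ) 1) (max 0 1)) := by
    refine ContinuousOn.mono ?_ himage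
    intro x hx
    refine ContinuousAt.continuousWithinAt (ContinuousAt.mul ?_ ?_)
    · exact Real.continuousAt_rpow_const x _ (Or.inl hx.1.ne')
    · exact (Real.continuousAt_rpow_const (1 - x) _
        (Or.inl (by have := hx.2; intro h; rw [sub_eq_zero] at h; exact absurd h.symm this.ne))).comp
        ((continuous_const.sub continuous_id).continuousAt)
  have hbetaIoc : IntegrableOn g (Ioc (0:ℝ) 1) volume := by
    have := beta_intable hs0 hs1
    rwa [intervalIntegrable_iff, uIoc_of_le zero_le_one] at this
  have hg1 : IntegrableOn g (f '' uIcc (0:ℝ) 1) volume := by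
    refine ((integrableOn_Icc_iff_integrableOn_Ioc).mpr hbetaIoc).mono_set ?_
    rintro _ ⟨x, hx, rfl⟩
    rw [uIcc_of_le zero_le_one] at hx
    exact ⟨Real.rpow_nonneg hx.1 p, Real.rpow_le_one hx.1 hx.2 hp0.le⟩
  have hmainIcc : IntegrableOn (fun x : ℝ => p * (1 - x ^ p) ^ (1 / p - 1)) (Icc (0:ℝ) 1)
      volume := by
    have := main_intable hp
    rw [intervalIntegrable_iff, uIoc_of_le zero_le_one] at this
    exact (integrableOn_Icc_iff_integrableOn_Ioc).mpr (this.const_mul p)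
  have hkey : ∀ x : ℝ, 0 < x → (g ∘ f) x * F x = p * (1 - x ^ p) ^ (1 / p - 1) := by
    intro x hx0
    have e1 : (x ^ p) ^ (1 / p - 1) = x ^ (1 - p) := by
      rw [← Real.rpow_mul hx0.le]
      congr 1
      field_simp
    have e2 : x ^ (1 - p) * x ^ (p - 1) = 1 := by
      rw [← Real.rpow_add hx0]
      norm_num
    simp only [hgdef, hfdef, hFdef, Function.comp_apply]
    rw [e1]
    linear_combination (p * (1 - x ^ p) ^ (1 / p - 1)) * e2
  have hae : ∀ᵐ x ∂(volume.restrict (Icc (0:ℝ) 1)), 0 < x := by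
    rw [ae_restrict_iff' measurableSet_Icc, MeasureTheory.ae_iff]
    refine measure_mono_null (fun x hx => ?_) (measure_singleton (0:ℝ))
    simp only [mem_setOf_eq, not_forall, not_lt] at hx
    obtain ⟨hmem, hle⟩ := hx
    have : x = 0 := le_antisymm hle hmem.1
    simp [this]
  have hg2 : IntegrableOn (fun x => (g ∘ f) x * F x) (uIcc (0:ℝ) 1) volume := by
    rw [uIcc_of_le zero_le_one]
    refine hmainIcc.congr ?_
    filter_upwards [hae] with x hx
    exact (hkey x hx).symm
  have hsub := intervalIntegral.integral_comp_mul_deriv''' hf hff' hg_cont hg1 hg2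
  have hf0 : f 0 = 0 := by simp only [hfdef]; exact Real.zero_rpow hp0.ne'
  have hf1 : f 1 = 1 := by simp only [hfdef]; exact Real.one_rpow p
  rw [hf0, hf1] at hsub
  have hcongr : (∫ x in (0:ℝ)..1, (g ∘ f) x * F x)
      = ∫ x in (0:ℝ)..1, p * (1 - x ^ p) ^ (1 / p - 1) := by
    refine intervalIntegral.integral_congr_ae (MeasureTheory.ae_of_all _ fun x hx => ?_)
    rw [uIoc_of_le zero_le_one] at hx
    exact hkey x hx.1
  rw [hcongr, intervalIntegral.integral_const_mul] at hsub
  exact hsub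

/-- For every `p ≥ 1`, `π_p = 2 Γ(1/p)² / (p Γ(2/p))`, where
`π_p = 2 ∫_0^1 (1-t^p)^(-(p-1)/p) dt` and `Γ` is the real Gamma function. -/
theorem pi_p_gamma (p : ℝ) (hp : 1 ≤ p) :
    2 * (∫ t in (0 : ℝ)..1, (1 - t ^ p) ^ (-(p - 1) / p))
      = 2 * (Real.Gamma (1 / p)) ^ 2 / (p * Real.Gamma (2 / p)) := by
  rcases eq_or_lt_of_le hp with h1 | hp1
  · subst h1
    norm_num [Real.rpow_zero, Real.Gamma_one, Real.Gamma_two]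
  · have hp0 : (0:ℝ) < p := by linarith
    have he : -(p - 1) / p = 1 / p - 1 := by field_simp; ring
    simp only [he]
    have hs0 : (0:ℝ) < 1 / p := by positivity
    have hΓ2 : 0 < Real.Gamma (2 / p) := Real.Gamma_pos_of_pos (by positivity)
    have hbg := beta_gamma hs0
    rw [show (1:ℝ) / p + 1 / p = 2 / p by ring] at hbg
    have hsub := subst_lemma hp1
    rw [eq_div_iff (ne_of_gt (mul_pos hp0 hΓ2))]
    linear_combination 2 * Real.Gamma (2 / p) * hsub - 2 * hbg
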